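/- Let h₁ : [0, T) → ℝ be a solution of the linear ODE (a(t)) h'' − b(t) t h' + c(t) h = 0 with a, c > 0 and b ≥ 0 continuous, with h₁(0) < 0 and h₁'(0) = 0. Then on any interval [0, s] ⊂ [0,T) on which h₁ < 0, we have h₁'' ≥ 0 (h₁ is convex where it is negative), and h₁' ≥ 0 on that interval. -/

import Mathlib

open Set MeasureTheory intervalIntegral

theorem convexity_where_negative (T : ℝ) (hT : 0 < T) (a b c h1 : ℝ → ℝ)
    (ha : ContinuousOn a (Ico 0 T)) (hbcont : ContinuousOn b (Ico 0 T))
    (hc : ContinuousOn c (Ico 0 T))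
    (hapos : ∀ t ∈ Ico 0 T, 0 < a t) (hcpos : ∀ t ∈ Ico 0 T, 0 < c t)
    (hbnn : ∀ t ∈ Ico 0 T, 0 ≤ b t)
    (hdiff1 : ∀ t ∈ Ico 0 T, DifferentiableAt ℝ h1 t)
    (hdiff2 : ∀ t ∈ Ico 0 T, DifferentiableAt ℝ (deriv h1) t)
    (hode : ∀ t ∈ Ico 0 T,
      a t * deriv (deriv h1) t - b t * t * deriv h1 t + c t * h1 t = 0)
    (hinit : h1 0 < 0) (hinit' : deriv h1 0 = 0) :
    ∀ s, 0 ≤ s → s < T → (∀ t ∈ Icc 0 s, h1 t < 0) →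
      ∀ t ∈ Icc 0 s, 0 ≤ deriv (deriv h1) t ∧ 0 ≤ deriv h1 t := by
  intro s hs0 hsT hneg
  set g : ℝ → ℝ := deriv h1 with hg
  have hsub : Icc 0 s ⊆ Ico 0 T := fun t ht => ⟨ht.1, lt_of_le_of_lt ht.2 hsT⟩
  have hsubo : Ioo 0 s ⊆ Ico 0 T := fun t ht => hsub ⟨le_of_lt ht.1, le_of_lt ht.2⟩
  -- the integrating-factor exponent integrand
  set p : ℝ → ℝ := fun t => b t * t / a t with hp
  have hpcontOn : ContinuousOn p (Ico 0 T) := by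
    apply ContinuousOn.div
    · exact hbcont.mul continuousOn_id
    · exact ha
    · intro t ht; exact (hapos t ht).ne'
  have hIooTopen : IsOpen (Ioo (0:ℝ) T) := isOpen_Ioo
  have hpcontIoo : ContinuousOn p (Ioo 0 T) :=
    hpcontOn.mono (fun t ht => ⟨le_of_lt ht.1, ht.2⟩)
  have hpInt : ∀ x ∈ Icc 0 s, IntervalIntegrable p volume 0 x := by
    intro x hx
    apply ContinuousOn.intervalIntegrable
    apply hpcontOn.mono
    intro t ht
    rw [uIcc_of_le hx.1] at ht
    exact hsub ⟨ht.1, le_trans ht.2 hx.2⟩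
  set P : ℝ → ℝ := fun x => ∫ u in (0:ℝ)..x, p u with hP
  have hPcont : ContinuousOn P (Icc 0 s) := by
    have h_int : IntegrableOn p (uIcc 0 s) volume := by
      rw [uIcc_of_le hs0]
      exact (hpcontOn.mono hsub).integrableOn_compact isCompact_Icc
    have := continuousOn_primitive_interval (a := 0) (b := s) (μ := volume) h_int
    rwa [uIcc_of_le hs0] at this
  have hPderiv : ∀ t ∈ Ioo 0 s, HasDerivAt P (p t) t := by
    intro t ht
    have htT : t ∈ Ioo (0:ℝ) T := ⟨ht.1, lt_trans ht.2 hsT⟩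
    refine integral_hasDerivAt_right (hpInt t ⟨le_of_lt ht.1, le_of_lt ht.2⟩) ?_ ?_
    · exact hpcontIoo.stronglyMeasurableAtFilter hIooTopen t htT
    · exact hpcontIoo.continuousAt (hIooTopen.mem_nhds htT)
  -- continuity of g on [0, s]
  have hgcont : ContinuousOn g (Icc 0 s) := fun t ht =>
    ((hdiff2 t (hsub ht)).continuousAt).continuousWithinAt
  set F : ℝ → ℝ := fun x => g x * Real.exp (-(P x)) with hF
  have hFcont : ContinuousOn F (Icc 0 s) :=
    hgcont.mul ((hPcont.neg).rexp)
  have hFderiv : ∀ t ∈ Ioo 0 s, HasDerivAt F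
      ((deriv g t - p t * g t) * Real.exp (-(P t))) t := by
    intro t ht
    have hgd : HasDerivAt g (deriv g t) t := (hdiff2 t (hsubo ht)).hasDerivAt
    have hPd : HasDerivAt (fun x => Real.exp (-(P x))) (-(p t) * Real.exp (-(P t))) t := by
      have := ((hPderiv t ht).neg).exp
      simpa [mul_comm] using this
    have : HasDerivAt (fun x => g x * Real.exp (-(P x))) _ t := hgd.mul hPd
    convert this using 1
    ring
  have hFderiv_nonneg : ∀ t ∈ Ioo 0 s, 0 ≤ deriv g t - p t * g t := by
    intro t ht
    have htI : t ∈ Ico 0 T := hsubo ht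
    have hat : 0 < a t := hapos t htI
    have hodet := hode t htI
    have hneg' : h1 t < 0 := hneg t ⟨le_of_lt ht.1, le_of_lt ht.2⟩
    have hct : 0 < c t := hcpos t htI
    have key : deriv g t - p t * g t = -(c t * h1 t) / a t := by
      rw [hp]
      field_simp
      nlinarith [hodet]
    rw [key]
    have h1' : 0 ≤ -(c t * h1 t) := by nlinarith
    exact div_nonneg h1' hat.le
  -- monotonicity of F
  have hFmono : MonotoneOn F (Icc 0 s) := by
    apply monotoneOn_of_deriv_nonneg (convex_Icc 0 s) hFcont
    · intro x hx
      rw [interior_Icc] at hx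
      exact ((hFderiv x hx).differentiableAt).differentiableWithinAt
    · intro x hx
      rw [interior_Icc] at hx
      rw [(hFderiv x hx).deriv]
      have := hFderiv_nonneg x hx
      positivity
  have hF0 : F 0 = 0 := by
    have hP0 : P 0 = 0 := intervalIntegral.integral_same
    simp [hF, hinit', hP0]
  have hgnn : ∀ t ∈ Icc 0 s, 0 ≤ g t := by
    intro t ht
    have h0m : (0:ℝ) ∈ Icc 0 s := ⟨le_refl _, hs0⟩
    have := hFmono h0m ht ht.1
    rw [hF0] at this
    simp only [hF] at this
    have hexp : 0 < Real.exp (-(P t)) := Real.exp_pos _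
    nlinarith [this]
  intro t ht
  have htI : t ∈ Ico 0 T := hsub ht
  have hgt := hgnn t ht
  constructor
  · have hodet := hode t htI
    have hat : 0 < a t := hapos t htI
    have hct : 0 < c t := hcpos t htI
    have hbt : 0 ≤ b t := hbnn t htI
    have hneg' : h1 t < 0 := hneg t ht
    nlinarith [mul_nonneg (mul_nonneg hbt ht.1) hgt]
  · exact hgt
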